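/- arXiv:1902.02736 — 2 statements merged into one kernel-verified Lean document; each statement's English description precedes it below -/
import Mathlib

section
/- Fix a C-sequence ⟨C_α | α < ω₁⟩ on ω₁ satisfying (⋆). Then ρ₂ is coherent modulo locally constant: for all β < γ < ω₁, the function α ↦ ρ₂(α,γ) − ρ₂(α,β) defined on β is locally constant with respect to the order topology on β. -/
noncomputable section
open Ordinal Set

/-- The first uncountable ordinal `ω₁`. -/
def omega1 : Ordinal.{0} := (Cardinal.aleph 1).ord

/-- `IsOtp s o`: the set of ordinals `s` has order type `o`. -/
def IsOtp (s : Set Ordinal.{0}) (o : Ordinal.{0}) : Prop :=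
  Nonempty (s ≃o Set.Iio o)

/-- A C-sequence on `ω₁`: each `C α` is a cofinal subset of `α` (in particular `C 0 = ∅`). -/
def IsCSequence (C : Ordinal.{0} → Set Ordinal.{0}) : Prop :=
  ∀ α, α < omega1 → (∀ ξ ∈ C α, ξ < α) ∧ (∀ ξ, ξ < α → ∃ η ∈ C α, ξ ≤ η)

/-- The condition `(⋆)`: `otp (C α) = cf (α)` for all `α < ω₁`. -/
def StarProperty (C : Ordinal.{0} → Set Ordinal.{0}) : Prop :=
  ∀ α, α < omega1 → IsOtp (C α) (Ordinal.cof α).ord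

/-- `Tr` is the upper trace function of the walk along the C-sequence `C`:
`Tr α α = {α}` and `Tr α β = {β} ∪ Tr α (min (C β \ α))` for `α < β < ω₁`. -/
def IsUpperTrace (C : Ordinal.{0} → Set Ordinal.{0})
    (Tr : Ordinal.{0} → Ordinal.{0} → Finset Ordinal.{0}) : Prop :=
  (∀ α, Tr α α = {α}) ∧
  ∀ α β, α < β → β < omega1 → Tr α β = insert β (Tr α (sInf (C β \ Set.Iio α)))

/-- `IsRho1 C Tr rho1`: `rho1 α β` is the maximum weight
`max {otp (C ξ ∩ α) | ξ ∈ Tr α β \ {α}}`, a natural number under `(⋆)`. -/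
def IsRho1 (C : Ordinal.{0} → Set Ordinal.{0})
    (Tr : Ordinal.{0} → Ordinal.{0} → Finset Ordinal.{0})
    (rho1 : Ordinal.{0} → Ordinal.{0} → ℕ) : Prop :=
  ∀ α β, α < β → β < omega1 →
    IsGreatest {o : Ordinal | ∃ ξ ∈ Tr α β, ξ ≠ α ∧ IsOtp (C ξ ∩ Set.Iio α) o}
      (rho1 α β)

/-- The number-of-steps function `ρ₂ (α, β) = |Tr (α, β)|`, as an integer. -/
def rho2 (Tr : Ordinal.{0} → Ordinal.{0} → Finset Ordinal.{0}) (α β : Ordinal.{0}) : ℤ :=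
  (Tr α β).card

lemma step_facts (C : Ordinal → Set Ordinal) (hC : IsCSequence C) (α δ : Ordinal)
    (hαδ : α < δ) (hδ : δ < omega1) :
    sInf (C δ \ Set.Iio α) ∈ C δ ∧ α ≤ sInf (C δ \ Set.Iio α) ∧ sInf (C δ \ Set.Iio α) < δ := by
  obtain ⟨h1, h2⟩ := hC δ hδ
  obtain ⟨η, hη, hαη⟩ := h2 α hαδ
  have hne : (C δ \ Set.Iio α).Nonempty := ⟨η, hη, not_lt.2 hαη⟩
  have hmem := csInf_mem hne
  exact ⟨hmem.1, not_lt.1 hmem.2, h1 _ hmem.1⟩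

lemma trace_le (C : Ordinal → Set Ordinal) (hC : IsCSequence C)
    (Tr : Ordinal → Ordinal → Finset Ordinal) (hTr : IsUpperTrace C Tr) :
    ∀ δ, δ < omega1 → ∀ α, α ≤ δ → ∀ x ∈ Tr α δ, x ≤ δ := by
  intro δ
  induction δ using Ordinal.induction with
  | _ δ IH =>
    intro hδ α hα x hx
    rcases eq_or_lt_of_le hα with rfl | hlt
    · rw [hTr.1] at hx
      simp only [Finset.mem_singleton] at hx
      exact hx.le
    · rw [hTr.2 α δ hlt hδ] at hx
      rcases Finset.mem_insert.mp hx with rfl | hx'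
      · exact le_refl _
      · obtain ⟨_, hge, hlt'⟩ := step_facts C hC α δ hlt hδ
        exact (IH _ hlt' (hlt'.trans hδ) α hge x hx').trans hlt'.le

lemma iio_nat_finite (n : ℕ) : (Set.Iio (n : Ordinal)).Finite := by
  have : Set.Iio (n:Ordinal) ⊆ (fun m : ℕ => (m : Ordinal)) '' (Set.Iio n) := by
    intro x hx
    obtain ⟨m, rfl⟩ := Ordinal.lt_omega0.mp (hx.trans (Ordinal.natCast_lt_omega0 n))
    exact ⟨m, by simpa using hx, rfl⟩
  exact ((Set.finite_Iio n).image _).subset this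

lemma bound_lemma (C : Ordinal → Set Ordinal) (hC : IsCSequence C) (hstar : StarProperty C)
    (α δ : Ordinal) (hα : 0 < α) (hαδ : α < δ) (hδ : δ < omega1) :
    ∃ η < α, ∀ c ∈ C δ, c < α → c ≤ η := by
  classical
  by_cases hne : (C δ ∩ Set.Iio α).Nonempty
  · obtain ⟨hmem, hge, _⟩ := step_facts C hC α δ hαδ hδ
    obtain ⟨e⟩ := hstar δ hδ
    have hcof : (Ordinal.cof δ).ord ≤ ω := by
      have hcard : δ.card ≤ Cardinal.aleph0 := by
        have h := Cardinal.lt_ord.mp hδ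
        have h2 : Cardinal.aleph 1 = Order.succ (Cardinal.aleph 0) := by
          rw [← Cardinal.aleph_succ]; norm_num
        rw [h2, Order.lt_succ_iff, Cardinal.aleph_zero] at h; exact h
      calc (Ordinal.cof δ).ord ≤ δ.card.ord := Cardinal.ord_le_ord.mpr (Ordinal.cof_le_card δ)
        _ ≤ Cardinal.aleph0.ord := Cardinal.ord_le_ord.mpr hcard
        _ = ω := Cardinal.ord_aleph0
    set δ₁ := sInf (C δ \ Set.Iio α) with hδ₁
    set m : Ordinal := (e ⟨δ₁, hmem⟩).1 with hm
    have hmω : m < ω := lt_of_lt_of_le (e ⟨δ₁, hmem⟩).2 hcof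
    obtain ⟨n, hn⟩ := Ordinal.lt_omega0.mp hmω
    set g : Ordinal → Ordinal := fun c => if h : c ∈ C δ then (e ⟨c, h⟩).1 else 0 with hg
    have himg : g '' (C δ ∩ Set.Iio α) ⊆ Set.Iio ((n : ℕ) : Ordinal) := by
      rintro _ ⟨c, ⟨hcC, hcα⟩, rfl⟩
      have h1 : (⟨c, hcC⟩ : C δ) < ⟨δ₁, hmem⟩ := by
        exact Subtype.mk_lt_mk.mpr (hcα.trans_le hge)
      have h2 : e ⟨c, hcC⟩ < e ⟨δ₁, hmem⟩ := e.lt_iff_lt.mpr h1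
      simp only [g, dif_pos hcC, Set.mem_Iio]
      rw [← hn]
      exact_mod_cast h2
    have hinj : Set.InjOn g (C δ ∩ Set.Iio α) := by
      rintro c ⟨hc, _⟩ c' ⟨hc', _⟩ hgc
      simp only [g, dif_pos hc, dif_pos hc'] at hgc
      have : (⟨c, hc⟩ : C δ) = ⟨c', hc'⟩ := e.injective (Subtype.ext hgc)
      exact congrArg Subtype.val this
    have hfin : (C δ ∩ Set.Iio α).Finite :=
      Set.Finite.of_finite_image ((iio_nat_finite n).subset himg) hinj
    obtain ⟨η, hηmem, hmax⟩ := Set.Finite.exists_maximalFor id _ hfin hne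
    refine ⟨η, hηmem.2, fun c hc hcα => ?_⟩
    by_contra hlt
    push_neg at hlt
    exact absurd (hmax ⟨hc, hcα⟩ hlt.le) (not_le.mpr hlt)
  · exact ⟨0, hα, fun c hc hcα => absurd ⟨c, hc, hcα⟩ hne⟩

lemma key_lemma (C : Ordinal → Set Ordinal) (hC : IsCSequence C) (hstar : StarProperty C)
    (Tr : Ordinal → Ordinal → Finset Ordinal) (hTr : IsUpperTrace C Tr)
    (α : Ordinal) (hα : 0 < α) :
    ∀ δ, α < δ → δ < omega1 → ∃ η < α, ∀ ξ, η < ξ → ξ ≤ α →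
      rho2 Tr ξ δ = rho2 Tr α δ + rho2 Tr ξ α - 1 := by
  intro δ
  induction δ using Ordinal.induction with
  | _ δ IH =>
    intro hαδ hδω
    obtain ⟨hmem, hge, hlt⟩ := step_facts C hC α δ hαδ hδω
    set δ₁ := sInf (C δ \ Set.Iio α) with hδ₁
    obtain ⟨η₂, hη₂, hbd⟩ := bound_lemma C hC hstar α δ hα hαδ hδω
    have hαω : α < omega1 := hαδ.trans hδω
    have hset : ∀ ξ, η₂ < ξ → ξ ≤ α → C δ \ Set.Iio ξ = C δ \ Set.Iio α := by
      intro ξ h1 h2; ext c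
      simp only [Set.mem_diff, Set.mem_Iio, not_lt]
      constructor
      · rintro ⟨hc, hξc⟩
        refine ⟨hc, ?_⟩
        by_contra h; push_neg at h
        exact absurd hξc (not_le.mpr ((hbd c hc h).trans_lt h1))
      · rintro ⟨hc, hαc⟩; exact ⟨hc, h2.trans hαc⟩
    have htr : ∀ ξ, η₂ < ξ → ξ ≤ α → Tr ξ δ = insert δ (Tr ξ δ₁) := by
      intro ξ h1 h2
      rw [hTr.2 ξ δ (h2.trans_lt hαδ) hδω, hset ξ h1 h2]
    rcases eq_or_lt_of_le hge with hδ₁α | hδ₁gt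
    · refine ⟨η₂, hη₂, fun ξ h1 h2 => ?_⟩
      have e1 : Tr ξ δ = insert δ (Tr ξ α) := by rw [htr ξ h1 h2, ← hδ₁α]
      have e2 : Tr α δ = insert δ (Tr α α) := by rw [htr α hη₂ le_rfl, ← hδ₁α]
      have n1 : δ ∉ Tr ξ α := fun h =>
        absurd (trace_le C hC Tr hTr α hαω ξ h2 δ h) (not_le.mpr hαδ)
      have n2 : δ ∉ Tr α α := by
        rw [hTr.1]
        simp only [Finset.mem_singleton]
        exact hαδ.ne'
      unfold rho2
      rw [e1, e2, Finset.card_insert_of_notMem n1, Finset.card_insert_of_notMem n2, hTr.1]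
      simp only [Finset.card_singleton]
      push_cast; ring
    · obtain ⟨η₁, hη₁, hIH⟩ := IH δ₁ hlt hδ₁gt (hlt.trans hδω)
      refine ⟨max η₁ η₂, max_lt hη₁ hη₂, fun ξ h1 h2 => ?_⟩
      have h1a : η₁ < ξ := (le_max_left _ _).trans_lt h1
      have h1b : η₂ < ξ := (le_max_right _ _).trans_lt h1
      have hδ₁ω : δ₁ < omega1 := hlt.trans hδω
      have e1 : Tr ξ δ = insert δ (Tr ξ δ₁) := htr ξ h1b h2
      have e2 : Tr α δ = insert δ (Tr α δ₁) := htr α hη₂ le_rfl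
      have n1 : δ ∉ Tr ξ δ₁ := fun h =>
        absurd (trace_le C hC Tr hTr δ₁ hδ₁ω ξ (h2.trans hδ₁gt.le) δ h) (not_le.mpr hlt)
      have n2 : δ ∉ Tr α δ₁ := fun h =>
        absurd (trace_le C hC Tr hTr δ₁ hδ₁ω α hδ₁gt.le δ h) (not_le.mpr hlt)
      have hξ := hIH ξ h1a h2
      unfold rho2 at hξ ⊢
      rw [e1, e2, Finset.card_insert_of_notMem n1, Finset.card_insert_of_notMem n2]
      push_cast at hξ ⊢
      linarith

/-- Theorem (coherence of ρ₂ modulo locally constant): for a C-sequence on ω₁ satisfying (⋆),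
for all `β < γ < ω₁` the function `α ↦ ρ₂(α,γ) - ρ₂(α,β)` is locally constant on `β`
(with the order topology). -/
theorem statement5 (C : Ordinal → Set Ordinal) (hC : IsCSequence C) (hstar : StarProperty C)
    (Tr : Ordinal → Ordinal → Finset Ordinal) (hTr : IsUpperTrace C Tr) :
    ∀ β γ, β < γ → γ < omega1 →
      IsLocallyConstant (fun α : Set.Iio β => rho2 Tr α.1 γ - rho2 Tr α.1 β) := by
  intro β γ hβγ hγω
  have hβω : β < omega1 := hβγ.trans hγω
  rw [IsLocallyConstant.iff_exists_open]
  rintro ⟨α, hαβ⟩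
  rcases eq_or_ne α 0 with rfl | hα0
  · refine ⟨Subtype.val ⁻¹' Set.Iio 1, isOpen_Iio.preimage continuous_subtype_val, by simp, ?_⟩
    rintro ⟨ξ, hξ⟩ hmem
    simp only [Set.mem_preimage, Set.mem_Iio] at hmem
    have hξ0 : ξ = 0 := Ordinal.lt_one_iff_zero.mp hmem
    simp only [hξ0]
  · have hα : 0 < α := pos_iff_ne_zero.mpr hα0
    obtain ⟨η₁, hη₁, h1⟩ := key_lemma C hC hstar Tr hTr α hα β hαβ hβω
    obtain ⟨η₂, hη₂, h2⟩ := key_lemma C hC hstar Tr hTr α hα γ (hαβ.trans hβγ) hγω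
    refine ⟨Subtype.val ⁻¹' (Set.Ioi (max η₁ η₂) ∩ Set.Iio (α + 1)),
      (isOpen_Ioi.inter isOpen_Iio).preimage continuous_subtype_val, ?_, ?_⟩
    · simp only [Set.mem_preimage, Set.mem_inter_iff, Set.mem_Ioi, Set.mem_Iio]
      refine ⟨max_lt hη₁ hη₂, ?_⟩
      rw [Ordinal.add_one_eq_succ]
      exact Order.lt_succ α
    · rintro ⟨ξ, hξβ⟩ hmem
      simp only [Set.mem_preimage, Set.mem_inter_iff, Set.mem_Ioi, Set.mem_Iio] at hmem
      obtain ⟨hm1, hm2⟩ := hmem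
      have hξα : ξ ≤ α := by
        rw [Ordinal.add_one_eq_succ, Order.lt_succ_iff] at hm2; exact hm2
      have e1 := h1 ξ ((le_max_left _ _).trans_lt hm1) hξα
      have e2 := h2 ξ ((le_max_right _ _).trans_lt hm1) hξα
      simp only
      rw [e1, e2]
      ring
end
end

section
/- Fix a C-sequence ⟨C_α | α < ω₁⟩ on ω₁ satisfying (⋆). Then ρ₂ is nontrivial modulo locally constant: there exists no function ρ̃₂ : ω₁ → ℤ such that for every β < ω₁ the function α ↦ ρ̃₂(α) − ρ₂(α,β) is locally constant with respect to the order topology on β. -/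
noncomputable section
open Ordinal Set

lemma omega1_isLimit : Order.IsSuccLimit omega1 := Cardinal.isSuccLimit_ord (Cardinal.aleph0_le_aleph 1)

lemma countable_iSup_lt {g : ℕ → Ordinal} (h : ∀ n, g n < omega1) : (⨆ n, g n) < omega1 := by
  apply Ordinal.iSup_lt_ord _ h
  rw [show omega1.cof = Cardinal.aleph 1 from Cardinal.isRegular_aleph_one.cof_eq]
  simpa using Cardinal.aleph0_lt_aleph_one

section walks
variable {C : Ordinal → Set Ordinal} {Tr : Ordinal → Ordinal → Finset Ordinal}

lemma step_aux (hC : IsCSequence C) {a b : Ordinal} (hab : a < b) (hb : b < omega1) :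
    a ≤ sInf (C b \ Set.Iio a) ∧ sInf (C b \ Set.Iio a) < b := by
  obtain ⟨η, hη, haη⟩ := (hC b hb).2 a hab
  have hne : (C b \ Set.Iio a).Nonempty := ⟨η, hη, not_lt.2 haη⟩
  have hmem := csInf_mem hne
  exact ⟨not_lt.1 hmem.2, (hC b hb).1 _ hmem.1⟩

lemma trace_bounds (hC : IsCSequence C) (hTr : IsUpperTrace C Tr) :
    ∀ b, b < omega1 → ∀ a, a ≤ b → (b ∈ Tr a b ∧ ∀ x ∈ Tr a b, a ≤ x ∧ x ≤ b) := by
  intro b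
  induction b using Ordinal.induction with
  | _ b IH =>
    intro hb a hab
    rcases eq_or_lt_of_le hab with rfl | hab'
    · rw [hTr.1]
      simp
    · obtain ⟨h1, h2⟩ := step_aux hC hab' hb
      rw [hTr.2 a b hab' hb]
      obtain ⟨hm, hx⟩ := IH _ h2 (h2.trans hb) a h1
      refine ⟨Finset.mem_insert_self _ _, ?_⟩
      intro x hxmem
      rcases Finset.mem_insert.1 hxmem with rfl | hx'
      · exact ⟨hab'.le, le_rfl⟩
      · exact ⟨(hx x hx').1, (hx x hx').2.trans h2.le⟩

lemma rho2_self (hTr : IsUpperTrace C Tr) (a : Ordinal) : rho2 Tr a a = 1 := by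
  simp [rho2, hTr.1]

lemma rho2_step (hC : IsCSequence C) (hTr : IsUpperTrace C Tr) {a b : Ordinal}
    (hab : a < b) (hb : b < omega1) :
    rho2 Tr a b = rho2 Tr a (sInf (C b \ Set.Iio a)) + 1 := by
  obtain ⟨h1, h2⟩ := step_aux hC hab hb
  have hnot : b ∉ Tr a (sInf (C b \ Set.Iio a)) := by
    intro hmem
    have := ((trace_bounds hC hTr _ (h2.trans hb) a h1).2 b hmem).2
    exact absurd this (not_le.2 h2)
  rw [rho2, rho2, hTr.2 a b hab hb, Finset.card_insert_of_notMem hnot]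
  push_cast
  ring

lemma rho2_ge_two (hC : IsCSequence C) (hTr : IsUpperTrace C Tr) {a b : Ordinal}
    (hab : a < b) (hb : b < omega1) : 2 ≤ rho2 Tr a b := by
  obtain ⟨h1, h2⟩ := step_aux hC hab hb
  have hmem := (trace_bounds hC hTr _ (h2.trans hb) a h1).1
  have hpos : 0 < (Tr a (sInf (C b \ Set.Iio a))).card := Finset.card_pos.2 ⟨_, hmem⟩
  rw [rho2_step hC hTr hab hb]
  have : (1 : ℤ) ≤ (Tr a (sInf (C b \ Set.Iio a))).card := by exact_mod_cast hpos
  unfold rho2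
  omega

lemma C_succ (hC : IsCSequence C)
    (hstar : ∀ α, α < omega1 → Nonempty ((C α : Set Ordinal) ≃o Set.Iio (Ordinal.cof α).ord))
    {α : Ordinal} (h : α + 1 < omega1) : C (α + 1) = {α} := by
  obtain ⟨e⟩ := hstar (α + 1) h
  have hcof : (Ordinal.cof (α + 1)).ord = 1 := by
    rw [Ordinal.add_one_eq_succ, Ordinal.cof_succ, Cardinal.ord_one]
  rw [hcof] at e
  have hsub : ∀ x y : C (α + 1), x = y := by
    intro x y
    have : e x = e y := by
      have hx := (e x).2
      have hy := (e y).2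
      simp only [Set.mem_Iio, Ordinal.lt_one_iff_zero] at hx hy
      exact Subtype.ext (hx.trans hy.symm)
    exact e.injective this
  obtain ⟨η, hη, haη⟩ := (hC (α + 1) h).2 α (by rw [Ordinal.add_one_eq_succ]; exact Order.lt_succ α)
  have hηlt : η < α + 1 := (hC (α + 1) h).1 η hη
  have hηα : η = α := le_antisymm (by rwa [Ordinal.add_one_eq_succ, Order.lt_succ_iff] at hηlt) haη
  ext z
  constructor
  · intro hz
    have := hsub ⟨z, hz⟩ ⟨η, hη⟩
    simp only [Subtype.mk.injEq] at this
    simp [this, hηα]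
  · rintro rfl
    exact hηα ▸ hη

lemma rho2_succ (hC : IsCSequence C)
    (hstar : ∀ α, α < omega1 → Nonempty ((C α : Set Ordinal) ≃o Set.Iio (Ordinal.cof α).ord))
    (hTr : IsUpperTrace C Tr) {ζ α : Ordinal} (hζ : ζ ≤ α) (h : α + 1 < omega1) :
    rho2 Tr ζ (α + 1) = rho2 Tr ζ α + 1 := by
  have hζα1 : ζ < α + 1 := lt_of_le_of_lt hζ (by rw [Ordinal.add_one_eq_succ]; exact Order.lt_succ α)
  have hσ : sInf (C (α + 1) \ Set.Iio ζ) = α := by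
    rw [C_succ hC hstar h]
    have : ({α} : Set Ordinal) \ Set.Iio ζ = {α} := by
      ext x
      simp only [Set.mem_diff, Set.mem_singleton_iff, Set.mem_Iio, not_lt]
      exact ⟨fun hx => hx.1, fun hx => ⟨hx, hx ▸ hζ⟩⟩
    rw [this, csInf_singleton]
  rw [rho2_step hC hTr hζα1 h, hσ]

theorem rho2_nontrivial_aux (C : Ordinal → Set Ordinal) (hC : IsCSequence C)
    (hstar : ∀ α, α < omega1 → Nonempty ((C α : Set Ordinal) ≃o Set.Iio (Ordinal.cof α).ord))
    (Tr : Ordinal → Ordinal → Finset Ordinal) (hTr : IsUpperTrace C Tr) :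
    ¬∃ f : Ordinal → ℤ, ∀ β, β < omega1 →
      IsLocallyConstant (fun α : Set.Iio β => f α.1 - rho2 Tr α.1 β) := by
  rintro ⟨f, hf⟩
  -- Step 1: tail property at limit ordinals
  have key : ∀ α : Ordinal, ∃ γ, Order.IsSuccLimit α → α < omega1 →
      γ < α ∧ ∀ ζ, γ < ζ → ζ < α → f ζ = f α + rho2 Tr ζ α - 1 := by
    intro α
    by_cases hcond : Order.IsSuccLimit α ∧ α < omega1
    case neg => exact ⟨0, fun h1 h2 => absurd ⟨h1, h2⟩ hcond⟩
    obtain ⟨hlim, hα⟩ := hcond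
    have hs : α + 1 < omega1 := by
      rw [Ordinal.add_one_eq_succ]; exact omega1_isLimit.succ_lt hα
    have hαs : α < α + 1 := by rw [Ordinal.add_one_eq_succ]; exact Order.lt_succ α
    have hlc := hf (α + 1) hs
    set g : Set.Iio (α + 1) → ℤ := fun x => f x.1 - rho2 Tr x.1 (α + 1) with hg
    have hopen : IsOpen (g ⁻¹' {g ⟨α, hαs⟩}) := hlc _
    obtain ⟨U, hU, hUeq⟩ := isOpen_induced_iff.1 hopen
    have hαU : α ∈ U := by
      have h0 : (⟨α, hαs⟩ : Set.Iio (α + 1)) ∈ g ⁻¹' {g ⟨α, hαs⟩} := rfl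
      rw [← hUeq] at h0; exact h0
    obtain ⟨γ, hγα, hIoo⟩ := (Ordinal.isOpen_iff).1 hU α hαU hlim
    refine ⟨γ, fun _ _ => ⟨hγα, ?_⟩⟩
    intro ζ hγζ hζα
    have hζs : ζ < α + 1 := hζα.trans hαs
    have hmem : (⟨ζ, hζs⟩ : Set.Iio (α + 1)) ∈ g ⁻¹' {g ⟨α, hαs⟩} := by
      rw [← hUeq]; exact hIoo ⟨hγζ, hζα⟩
    have heq : f ζ - rho2 Tr ζ (α + 1) = f α - rho2 Tr α (α + 1) := by
      simpa [hg] using hmem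
    have h1 : rho2 Tr ζ (α + 1) = rho2 Tr ζ α + 1 := rho2_succ hC hstar hTr hζα.le hs
    have h2 : rho2 Tr α (α + 1) = rho2 Tr α α + 1 := rho2_succ hC hstar hTr le_rfl hs
    rw [h1, h2, rho2_self hTr] at heq
    linarith
  choose γf hγf using key
  -- Step 2: pairwise decrease
  have pairS : ∀ a b : Ordinal, a < omega1 → b < omega1 → Order.IsSuccLimit b → γf b < a → a < b →
      f b + 1 ≤ f a := by
    intro a b _ hb hblim hγa hab
    obtain ⟨_, hp⟩ := hγf b hblim hb
    have h1 := hp a hγa hab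
    have h2 := rho2_ge_two hC hTr hab hb
    linarith
  -- Step 3: pigeonhole
  have pig : ∃ ξ, ξ < omega1 ∧ ∀ β, β < omega1 →
      ∃ α, α < omega1 ∧ Order.IsSuccLimit α ∧ γf α ≤ ξ ∧ β < α := by
    by_contra hno
    push_neg at hno
    have hno' : ∀ ξ, ∃ β, ξ < omega1 →
        (β < omega1 ∧ ∀ α, α < omega1 → Order.IsSuccLimit α → γf α ≤ ξ → α ≤ β) := by
      intro ξ
      by_cases h : ξ < omega1
      · obtain ⟨β, hβ⟩ := hno ξ h
        exact ⟨β, fun _ => hβ⟩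
      · exact ⟨0, fun hh => absurd hh h⟩
    choose B hB using hno'
    set seq : ℕ → Ordinal := (fun n => Nat.rec 0 (fun _ p => max (B p) p + 1) n) with hseq
    have hseq0 : seq 0 = 0 := rfl
    have hseqS : ∀ n, seq (n + 1) = max (B (seq n)) (seq n) + 1 := fun n => rfl
    have hseqlt : ∀ n, seq n < omega1 := by
      intro n
      induction n with
      | zero => exact omega1_isLimit.bot_lt
      | succ n ih =>
        rw [hseqS, Ordinal.add_one_eq_succ]
        exact omega1_isLimit.succ_lt (max_lt ((hB (seq n) ih).1) ih)
    have hseqmono : ∀ n, seq n < seq (n + 1) := by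
      intro n
      rw [hseqS, Ordinal.add_one_eq_succ]
      exact lt_of_le_of_lt (le_max_right _ _) (Order.lt_succ _)
    have hL : (⨆ n, seq n) < omega1 := countable_iSup_lt hseqlt
    have hseqL : ∀ n, seq n < ⨆ n, seq n :=
      fun n => lt_of_lt_of_le (hseqmono n) (Ordinal.le_iSup seq (n + 1))
    have hLlim : Order.IsSuccLimit (⨆ n, seq n) := by
      rw [Ordinal.isSuccLimit_iff, Order.isSuccPrelimit_iff_succ_lt]
      constructor
      · exact ne_of_gt (lt_of_le_of_lt (zero_le (a := seq 0)) (hseqL 0))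
      · intro a ha
        obtain ⟨n, hn⟩ := Ordinal.lt_iSup_iff.1 ha
        exact lt_of_le_of_lt (Order.succ_le_of_lt (hn.trans_le (le_of_lt (hseqmono n)))) (hseqL (n+1))
    obtain ⟨hγL, -⟩ := hγf _ hLlim hL
    obtain ⟨n, hn⟩ := Ordinal.lt_iSup_iff.1 hγL
    have h1 : (⨆ n, seq n) ≤ B (seq n) :=
      (hB (seq n) (hseqlt n)).2 _ hL hLlim hn.le
    have h2 : B (seq n) < seq (n + 1) := by
      rw [hseqS, Ordinal.add_one_eq_succ]
      exact lt_of_le_of_lt (le_max_left _ _) (Order.lt_succ _)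
    exact absurd (h1.trans_lt (h2.trans (hseqL (n + 1)))) (lt_irrefl _)
  -- Step 4: build an increasing sequence and derive a contradiction
  obtain ⟨ξ₀, hξ₀lt, hξ₀⟩ := pig
  have hpick : ∀ β, ∃ α, β < omega1 →
      (α < omega1 ∧ Order.IsSuccLimit α ∧ γf α ≤ ξ₀ ∧ β < α) := by
    intro β
    by_cases h : β < omega1
    · obtain ⟨α, hα⟩ := hξ₀ β h
      exact ⟨α, fun _ => hα⟩
    · exact ⟨0, fun hh => absurd hh h⟩
  choose pk hpk using hpick
  set δ : ℕ → Ordinal := (fun n => Nat.rec (pk ξ₀) (fun _ p => pk p) n) with hδ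
  have hδS : ∀ n, δ (n + 1) = pk (δ n) := fun n => rfl
  have hinv : ∀ n, δ n < omega1 ∧ Order.IsSuccLimit (δ n) ∧ γf (δ n) ≤ ξ₀ ∧ ξ₀ < δ n := by
    intro n
    induction n with
    | zero => exact hpk ξ₀ hξ₀lt
    | succ n ih =>
      obtain ⟨h1, h2, h3, h4⟩ := hpk (δ n) ih.1
      exact ⟨h1, h2, h3, ih.2.2.2.trans h4⟩
  have hmono : ∀ n, δ n < δ (n + 1) := fun n => (hpk (δ n) (hinv n).1).2.2.2
  have hdec : ∀ n, f (δ (n + 1)) + 1 ≤ f (δ n) := by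
    intro n
    exact pairS (δ n) (δ (n + 1)) (hinv n).1 (hinv (n + 1)).1 (hinv (n + 1)).2.1
      (lt_of_le_of_lt (hinv (n + 1)).2.2.1 (hinv n).2.2.2) (hmono n)
  have hchain : ∀ n, f (δ n) ≤ f (δ 0) - n := by
    intro n
    induction n with
    | zero => simp
    | succ n ih =>
      have := hdec n
      push_cast
      push_cast at ih
      linarith
  have hM : (⨆ n, δ n) < omega1 := countable_iSup_lt (fun n => (hinv n).1)
  obtain ⟨hε1, hε2, hε3, hε4⟩ := hpk _ hM
  have hfε : ∀ n, f (pk (⨆ n, δ n)) + 1 ≤ f (δ n) := by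
    intro n
    exact pairS (δ n) _ (hinv n).1 hε1 hε2
      (lt_of_le_of_lt hε3 (hinv n).2.2.2)
      (lt_of_le_of_lt (Ordinal.le_iSup δ n) hε4)
  set N : ℕ := (f (δ 0) - f (pk (⨆ n, δ n))).toNat with hN
  have h1 := hfε N
  have h2 := hchain N
  have h3 : (f (δ 0) - f (pk (⨆ n, δ n))) ≤ (N : ℤ) := Int.self_le_toNat _
  linarith


/-- Theorem (nontriviality of ρ₂ modulo locally constant): for a C-sequence on ω₁ satisfying
(⋆), there is no `ρ̃₂ : ω₁ → ℤ` such that `ρ̃₂ - ρ₂(·,β)` is locally constant on `β`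
(with the order topology) for every `β < ω₁`. -/
theorem statement6 (C : Ordinal → Set Ordinal) (hC : IsCSequence C) (hstar : StarProperty C)
    (Tr : Ordinal → Ordinal → Finset Ordinal) (hTr : IsUpperTrace C Tr) :
    ¬∃ f : Ordinal → ℤ, ∀ β, β < omega1 →
      IsLocallyConstant (fun α : Set.Iio β => f α.1 - rho2 Tr α.1 β) :=
  rho2_nontrivial_aux C hC (fun α h => hstar α h) Tr hTr
end walks
end
end
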